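/- In the extension construction, let u = u_1…u_m and v = v_1…v_m be degree-m monomials over X_0 with u − v ∈ I_0, where I_0 is the two-sided ideal of K⟨X_0⟩ generated by M_0'. Then for all non-negative integers k_1,…,k_{m−1} one has ũ − ṽ ∈ I, where ũ = u_1 x_1^{k_1} u_2 x_1^{k_2} … x_1^{k_{m−1}} u_m, ṽ = v_1 x_1^{k_1} v_2 x_1^{k_2} … x_1^{k_{m−1}} v_m, and I is the two-sided ideal of K⟨X⟩ generated by M'. -/

import Mathlib

noncomputable section

/-- The monomial in the free algebra `K⟨X⟩ = MonoidAlgebra K (FreeMonoid X)`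
corresponding to a word `w`. -/
def mOfW (K : Type*) [Field K] {X : Type*} (w : FreeMonoid X) :
    MonoidAlgebra K (FreeMonoid X) :=
  MonoidAlgebra.single w 1

/-- The degree-`m` monomial `u_1 u_2 ⋯ u_m`. -/
def mOf (K : Type*) [Field K] {X : Type*} {m : ℕ} (u : Fin m → X) :
    MonoidAlgebra K (FreeMonoid X) :=
  mOfW K (FreeMonoid.ofList (List.ofFn u))

/-- The degree-2 monomial `ab`. -/
def m2 (K : Type*) [Field K] {X : Type*} (a b : X) :
    MonoidAlgebra K (FreeMonoid X) :=
  mOfW K (FreeMonoid.of a * FreeMonoid.of b)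

/-- The support of an element of `K⟨X⟩`: the set of words occurring with
nonzero coefficient. -/
def suppOf {K X : Type*} [Field K] (f : MonoidAlgebra K (FreeMonoid X)) :
    Finset (FreeMonoid X) :=
  Finsupp.support f.coeff

/-- The two-sided ideal generated by a set `s` in a `K`-algebra, viewed as the
`K`-submodule spanned by all products `p * a * q` with `a ∈ s`. -/
def idealSpan (K : Type*) [Field K] {A : Type*} [Ring A] [Algebra K A]
    (s : Set A) : Submodule K A :=
  Submodule.span K {x | ∃ p q : A, ∃ a ∈ s, x = p * a * q}

/-- `M` is a Quasierhöhungssystem (QHS) on the totally ordered set `X`. -/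
def IsQHS (K : Type*) [Field K] {X : Type*} [LinearOrder X]
    (M : Set (MonoidAlgebra K (FreeMonoid X))) : Prop :=
  M.PairwiseDisjoint (fun g => (suppOf g : Set (FreeMonoid X))) ∧
  (⋃ g ∈ M, (suppOf g : Set (FreeMonoid X))) =
    {w | ∃ a b : X, b ≤ a ∧ w = FreeMonoid.of a * FreeMonoid.of b} ∧
  ∀ g ∈ M,
    (∃ a b : X, b ≤ a ∧ g = m2 K a b) ∨
    (∃ a b c d : X, d ≤ c ∧ c < b ∧ b ≤ a ∧ g = m2 K a b - m2 K c d) ∨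
    (∃ a b d : X, d < b ∧ b < a ∧ g = m2 K a b - m2 K b d)

/-- The maximal element `b = max X`. -/
def topEl (X : Type*) [Fintype X] [LinearOrder X] [Nonempty X] : X :=
  Finset.univ.max' Finset.univ_nonempty

/-- The minimal element `a = min X`. -/
def botEl (X : Type*) [Fintype X] [LinearOrder X] [Nonempty X] : X :=
  Finset.univ.min' Finset.univ_nonempty

/-- The ideal `I_M`, generated by `M' = M \ {ba}` where `a = min X`, `b = max X`. -/
def qhsIdeal (K : Type*) [Field K] {X : Type*} [Fintype X] [LinearOrder X] [Nonempty X]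
    (M : Set (MonoidAlgebra K (FreeMonoid X))) :
    Submodule K (MonoidAlgebra K (FreeMonoid X)) :=
  idealSpan K (M \ {m2 K (topEl X) (botEl X)})

/-- The right-to-left lexicographical strict order on degree-`m` monomials. -/
def rlLt {X : Type*} [LinearOrder X] {m : ℕ} (u v : Fin m → X) : Prop :=
  ∃ j : Fin m, u j < v j ∧ ∀ l : Fin m, j < l → u l = v l

/-- The monomial `u` is minimal with respect to the QHS `M`. -/
def MinimalMon (K : Type*) [Field K] {X : Type*} [Fintype X] [LinearOrder X] [Nonempty X]
    (M : Set (MonoidAlgebra K (FreeMonoid X))) {m : ℕ} (u : Fin m → X) : Prop :=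
  mOf K u ∉ qhsIdeal K M ∧
    ∀ v : Fin m → X, mOf K u - mOf K v ∈ qhsIdeal K M → u = v ∨ rlLt u v

/-- The monomial `u` is tame with respect to the QHS `M`. -/
def TameMon (K : Type*) [Field K] {X : Type*} [Fintype X] [LinearOrder X] [Nonempty X]
    (M : Set (MonoidAlgebra K (FreeMonoid X))) {m : ℕ} (u : Fin m → X) : Prop :=
  MinimalMon K M u ∧ ∃ v : Fin m → X, ∃ j : Fin m,
    mOf K u - mOf K v ∈ qhsIdeal K M ∧ v j = topEl X ∧ ∀ l : Fin m, j < l → v l = u l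

/-- The monomial `u` is singular with respect to the QHS `M`: minimal and not tame. -/
def SingularMon (K : Type*) [Field K] {X : Type*} [Fintype X] [LinearOrder X] [Nonempty X]
    (M : Set (MonoidAlgebra K (FreeMonoid X))) {m : ℕ} (u : Fin m → X) : Prop :=
  MinimalMon K M u ∧ ¬ TameMon K M u

/-- The QHS `M` is regular: for some positive `m` there are no singular monomials
of degree `m`. -/
def RegularQHS (K : Type*) [Field K] {X : Type*} [Fintype X] [LinearOrder X] [Nonempty X]
    (M : Set (MonoidAlgebra K (FreeMonoid X))) : Prop :=
  ∃ m : ℕ, 0 < m ∧ ∀ u : Fin m → X, ¬ SingularMon K M u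

/-- `e ∈ X` is pure with respect to `M`: whenever `ab - ce ∈ M`,
one has `a ≥ b > c ≥ e`. -/
def PureEl (K : Type*) [Field K] {X : Type*} [LinearOrder X]
    (M : Set (MonoidAlgebra K (FreeMonoid X))) (e : X) : Prop :=
  ∀ a b c : X, m2 K a b - m2 K c e ∈ M → e ≤ c ∧ c < b ∧ b ≤ a

/-- The set `X₀ = {x_3, …, x_{n-2}}` (0-based: indices `2, …, n-3` of `Fin n`). -/
abbrev X0 (n : ℕ) := {x : Fin n // 2 ≤ x.val ∧ x.val + 3 ≤ n}

instance factNeZero (n : ℕ) [Fact (5 ≤ n)] : NeZero n :=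
  ⟨by have h := Fact.out (p := 5 ≤ n); omega⟩

instance factNonemptyX0 (n : ℕ) [Fact (5 ≤ n)] : Nonempty (X0 n) :=
  ⟨⟨⟨2, by have h := Fact.out (p := 5 ≤ n); omega⟩,
    ⟨le_refl 2, show 2 + 3 ≤ n by have h := Fact.out (p := 5 ≤ n); omega⟩⟩⟩

open Fin.NatCast in
/-- The generator `x_j` of the paper (1-based index `j`) as an element of `Fin n`. -/
def px (n : ℕ) [NeZero n] (j : ℕ) : Fin n := (↑(j - 1) : Fin n)

/-- The embedding `K⟨X₀⟩ → K⟨X⟩` induced by the inclusion `X₀ ⊆ X`. -/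
def emb (K : Type*) [Field K] (n : ℕ)
    (f : MonoidAlgebra K (FreeMonoid (X0 n))) : MonoidAlgebra K (FreeMonoid (Fin n)) :=
  MonoidAlgebra.ofCoeff (Finsupp.mapDomain (FreeMonoid.map (fun x : X0 n => (x : Fin n))) f.coeff)

/-- The set `M'` of the extension construction. -/
def Mext' (K : Type*) [Field K] (n : ℕ) [Fact (5 ≤ n)]
    (M0 : Set (MonoidAlgebra K (FreeMonoid (X0 n)))) :
    Set (MonoidAlgebra K (FreeMonoid (Fin n))) :=
  (emb K n '' (M0 \ {m2 K (topEl (X0 n)) (botEl (X0 n))})) ∪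
  {g | ∃ j : ℕ, 2 ≤ j ∧ j ≤ n - 2 ∧
      g = m2 K (px n n) (px n j) - m2 K (px n j) (px n 1)} ∪
  {g | ∃ j : ℕ, 2 ≤ j ∧ j ≤ n - 3 ∧
      g = m2 K (px n (n-1)) (px n (j+1)) - m2 K (px n j) (px n 2)} ∪
  {m2 K (px n n) (px n n) - m2 K (px n (n-1)) (px n 1),
   m2 K (px n n) (px n (n-1)) - m2 K (px n (n-2)) (px n 2),
   m2 K (px n (n-1)) (px n (n-1)) - m2 K (px n (n-2)) (px n 3),
   m2 K (px n (n-1)) (px n 2) - m2 K (px n 1) (px n 1)}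

/-- The set `M = M' ∪ {x_n x_1}` of the extension construction. -/
def Mext (K : Type*) [Field K] (n : ℕ) [Fact (5 ≤ n)]
    (M0 : Set (MonoidAlgebra K (FreeMonoid (X0 n)))) :
    Set (MonoidAlgebra K (FreeMonoid (Fin n))) :=
  Mext' K n M0 ∪ {m2 K (px n n) (px n 1)}

/-- The interleaved word `u_1 x_1^{ks 0} u_2 x_1^{ks 1} ⋯ x_1^{ks (m-2)} u_m`. -/
def ileave (n : ℕ) [NeZero n] {m : ℕ} (u : Fin m → Fin n) (ks : ℕ → ℕ) :
    FreeMonoid (Fin n) :=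
  (List.ofFn fun i : Fin m =>
    if i.val + 1 = m then FreeMonoid.of (u i)
    else FreeMonoid.of (u i) * (FreeMonoid.of (px n 1)) ^ ks i.val).prod

section AuxExt

open FreeMonoid

variable {K : Type*} [Field K]

theorem m2_def {X : Type*} (a b : X) :
    m2 K a b = mOfW K (FreeMonoid.of a * FreeMonoid.of b) := rfl

theorem mOfW_mul {X : Type*} (w w' : FreeMonoid X) :
    mOfW K w * mOfW K w' = mOfW K (w * w') := by
  simp [mOfW, MonoidAlgebra.single_mul_single]

theorem of_pow_eq {X : Type*} (x : X) (k : ℕ) :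
    (FreeMonoid.of x) ^ k = FreeMonoid.ofList (List.replicate k x) := by
  induction k with
  | zero => rfl
  | succ k ih => rw [pow_succ', ih, List.replicate_succ]; rfl

theorem mem_idealSpan_of_mem {A : Type*} [Ring A] [Algebra K A] {s : Set A}
    (p q : A) {g : A} (hg : g ∈ s) : p * g * q ∈ idealSpan K s :=
  Submodule.subset_span ⟨p, q, g, hg, rfl⟩

theorem idealSpan_mul_mem {A : Type*} [Ring A] [Algebra K A] {s : Set A}
    (p q : A) {x : A} (hx : x ∈ idealSpan K s) : p * x * q ∈ idealSpan K s := by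
  induction hx using Submodule.span_induction with
  | mem y hy =>
    obtain ⟨p', q', g, hg, rfl⟩ := hy
    exact Submodule.subset_span ⟨p * p', q' * q, g, hg, by simp [mul_assoc]⟩
  | zero => simpa using Submodule.zero_mem _
  | add y z _ _ hy hz => simpa [mul_add, add_mul] using Submodule.add_mem _ hy hz
  | smul c y _ hy =>
    simpa [mul_smul_comm, smul_mul_assoc] using Submodule.smul_mem _ c hy

variable (n : ℕ) (ks : ℕ → ℕ) [NeZero n]

/-- interleaving of a list, where no letter is last (every letter is padded). -/
def psiPre : ℕ → List (Fin n) → List (Fin n)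
  | _, [] => []
  | k, a :: t => a :: (List.replicate (ks k) (px n 1) ++ psiPre (k + 1) t)

/-- interleaving of a list (the last letter gets no padding). -/
def psiF : ℕ → List (Fin n) → List (Fin n)
  | _, [] => []
  | _, [a] => [a]
  | k, a :: b :: t => a :: (List.replicate (ks k) (px n 1) ++ psiF (k + 1) (b :: t))

def tailF (k : ℕ) : List (Fin n) → List (Fin n)
  | [] => []
  | a :: t => List.replicate (ks (k + 1)) (px n 1) ++ psiF n ks (k + 2) (a :: t)

@[simp] theorem psiF_nil (k : ℕ) : psiF n ks k [] = [] := rfl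
@[simp] theorem psiF_singleton (k : ℕ) (a : Fin n) : psiF n ks k [a] = [a] := rfl
theorem psiF_cons_cons (k : ℕ) (a b : Fin n) (t : List (Fin n)) :
    psiF n ks k (a :: b :: t) =
      a :: (List.replicate (ks k) (px n 1) ++ psiF n ks (k + 1) (b :: t)) := rfl
@[simp] theorem psiPre_nil (k : ℕ) : psiPre n ks k [] = [] := rfl
theorem psiPre_cons (k : ℕ) (a : Fin n) (t : List (Fin n)) :
    psiPre n ks k (a :: t) =
      a :: (List.replicate (ks k) (px n 1) ++ psiPre n ks (k + 1) t) := rfl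

theorem psiF_split (t : List (Fin n)) (ht : t ≠ []) :
    ∀ (w : List (Fin n)) (k : ℕ),
      psiF n ks k (w ++ t) = psiPre n ks k w ++ psiF n ks (k + w.length) t := by
  intro w
  induction w with
  | nil => intro k; simp
  | cons a w ih =>
    intro k
    cases w with
    | nil =>
      cases t with
      | nil => exact absurd rfl ht
      | cons b t' =>
        simp [psiF_cons_cons, psiPre_cons]
    | cons c w' =>
      have h1 : psiF n ks k ((a :: c :: w') ++ t) =
          a :: (List.replicate (ks k) (px n 1) ++ psiF n ks (k + 1) ((c :: w') ++ t)) := rfl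
      rw [h1, ih (k + 1), psiPre_cons]
      have h2 : k + 1 + (c :: w').length = k + (a :: c :: w').length := by
        simp; omega
      rw [h2]
      simp [psiPre_cons, List.append_assoc]

theorem psiF_two (k : ℕ) (x y : Fin n) (L : List (Fin n)) :
    psiF n ks k (x :: y :: L) =
      x :: (List.replicate (ks k) (px n 1) ++ (y :: tailF n ks k L)) := by
  cases L with
  | nil => rfl
  | cons c t => rfl

theorem psiF_decomp (L₁ L₂ : List (Fin n)) (x y : Fin n) :
    FreeMonoid.ofList (psiF n ks 0 (L₁ ++ x :: y :: L₂)) =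
      FreeMonoid.ofList (psiPre n ks 0 L₁) *
        (FreeMonoid.of x * (FreeMonoid.of (px n 1)) ^ (ks L₁.length) * FreeMonoid.of y) *
        FreeMonoid.ofList (tailF n ks L₁.length L₂) := by
  rw [psiF_split n ks _ (by simp) L₁ 0, psiF_two, zero_add, of_pow_eq]
  show FreeMonoid.ofList _ = FreeMonoid.ofList (_ ++ (([x] ++ _) ++ [y]) ++ _)
  congr 1
  simp

end AuxExt

section AuxExt2

variable {K : Type*} [Field K] {n : ℕ} [Fact (5 ≤ n)]

theorem px_val_add_one (a : Fin n) : px n (a.val + 1) = a := by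
  simp only [px, Nat.add_sub_cancel]
  exact Fin.cast_val_eq_self a

theorem move_mem (M0 : Set (MonoidAlgebra K (FreeMonoid (X0 n))))
    {a : Fin n} (ha2 : 2 ≤ a.val) (ha3 : a.val + 3 ≤ n) (k : ℕ)
    (w : FreeMonoid (Fin n)) :
    mOfW K (FreeMonoid.of a * (FreeMonoid.of (px n 1)) ^ k * w) -
      mOfW K ((FreeMonoid.of (px n n)) ^ k * FreeMonoid.of a * w) ∈
      idealSpan K (Mext' K n M0) := by
  have hn : 5 ≤ n := Fact.out
  have hg : m2 K (px n n) a - m2 K a (px n 1) ∈ Mext' K n M0 := by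
    refine Or.inl (Or.inl (Or.inr ⟨a.val + 1, by omega, by omega, ?_⟩))
    rw [px_val_add_one]
  induction k with
  | zero => simpa using Submodule.zero_mem _
  | succ k ih =>
    have h1 : mOfW K (FreeMonoid.of a * FreeMonoid.of (px n 1) *
            ((FreeMonoid.of (px n 1)) ^ k * w)) -
          mOfW K (FreeMonoid.of (px n n) *
            (FreeMonoid.of a * (FreeMonoid.of (px n 1)) ^ k * w)) ∈
          idealSpan K (Mext' K n M0) := by
      have heq : mOfW K (FreeMonoid.of a * FreeMonoid.of (px n 1) *
            ((FreeMonoid.of (px n 1)) ^ k * w)) -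
          mOfW K (FreeMonoid.of (px n n) *
            (FreeMonoid.of a * (FreeMonoid.of (px n 1)) ^ k * w)) =
          -((1 : MonoidAlgebra K (FreeMonoid (Fin n))) *
            (m2 K (px n n) a - m2 K a (px n 1)) *
            mOfW K ((FreeMonoid.of (px n 1)) ^ k * w)) := by
        simp [m2_def, sub_mul, mOfW_mul, mul_assoc]
      rw [heq]
      exact Submodule.neg_mem _ (mem_idealSpan_of_mem _ _ hg)
    have h2 : mOfW K (FreeMonoid.of (px n n) *
            (FreeMonoid.of a * (FreeMonoid.of (px n 1)) ^ k * w)) -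
          mOfW K (FreeMonoid.of (px n n) *
            ((FreeMonoid.of (px n n)) ^ k * FreeMonoid.of a * w)) ∈
          idealSpan K (Mext' K n M0) := by
      have := idealSpan_mul_mem (mOfW K (FreeMonoid.of (px n n))) 1 ih
      simpa [mul_sub, mOfW_mul] using this
    have h3 := Submodule.add_mem _ h1 h2
    rw [sub_add_sub_cancel] at h3
    have e1 : FreeMonoid.of a * FreeMonoid.of (px n 1) *
        ((FreeMonoid.of (px n 1)) ^ k * w) =
        FreeMonoid.of a * (FreeMonoid.of (px n 1)) ^ (k + 1) * w := by
      rw [pow_succ']; simp [mul_assoc]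
    have e2 : FreeMonoid.of (px n n) *
        ((FreeMonoid.of (px n n)) ^ k * FreeMonoid.of a * w) =
        (FreeMonoid.of (px n n)) ^ (k + 1) * FreeMonoid.of a * w := by
      rw [pow_succ']; simp [mul_assoc]
    rwa [e1, e2] at h3

theorem move2_mem (M0 : Set (MonoidAlgebra K (FreeMonoid (X0 n))))
    {a b : Fin n} (ha2 : 2 ≤ a.val) (ha3 : a.val + 3 ≤ n) (k : ℕ) :
    mOfW K (FreeMonoid.of a * (FreeMonoid.of (px n 1)) ^ k * FreeMonoid.of b) -
      mOfW K ((FreeMonoid.of (px n n)) ^ k) * m2 K a b ∈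
      idealSpan K (Mext' K n M0) := by
  have := move_mem M0 ha2 ha3 k (FreeMonoid.of b)
  have e : mOfW K ((FreeMonoid.of (px n n)) ^ k * FreeMonoid.of a * FreeMonoid.of b) =
      mOfW K ((FreeMonoid.of (px n n)) ^ k) * m2 K a b := by
    simp [m2_def, mOfW_mul, mul_assoc]
  rwa [e] at this

theorem emb_single (w : FreeMonoid (X0 n)) (c : K) :
    emb K n (MonoidAlgebra.single w c) =
      MonoidAlgebra.single (FreeMonoid.map (fun x : X0 n => (x : Fin n)) w) c :=
  congrArg MonoidAlgebra.ofCoeff Finsupp.mapDomain_single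

theorem emb_m2 (a b : X0 n) :
    emb K n (m2 K a b) = m2 K (a : Fin n) (b : Fin n) := by
  rw [m2_def, mOfW, emb_single]
  rfl

theorem emb_sub (f g : MonoidAlgebra K (FreeMonoid (X0 n))) :
    emb K n (f - g) = emb K n f - emb K n g := by
  have : emb K n (f - g) + emb K n g = emb K n f := by
    rw [emb, emb, emb, ← MonoidAlgebra.ofCoeff_add, ← Finsupp.mapDomain_add, ← MonoidAlgebra.coeff_add, sub_add_cancel]
  exact eq_sub_of_add_eq this

end AuxExt2

section AuxExt3

variable {K : Type*} [Field K] {n : ℕ} [Fact (5 ≤ n)]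

/-- The interleaving map on words over `X0 n`. -/
def psiW (ks : ℕ → ℕ) (w : FreeMonoid (X0 n)) : FreeMonoid (Fin n) :=
  FreeMonoid.ofList (psiF n ks 0
    ((FreeMonoid.map (fun x : X0 n => (x : Fin n)) w).toList))

/-- The linear interleaving map on the free algebra. -/
def Phi (ks : ℕ → ℕ) (f : MonoidAlgebra K (FreeMonoid (X0 n))) :
    MonoidAlgebra K (FreeMonoid (Fin n)) :=
  MonoidAlgebra.ofCoeff (Finsupp.mapDomain (psiW (n := n) ks) f.coeff)

theorem Phi_single (ks : ℕ → ℕ) (w : FreeMonoid (X0 n)) (c : K) :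
    Phi ks (MonoidAlgebra.single w c) =
      MonoidAlgebra.single (psiW (n := n) ks w) c :=
  congrArg MonoidAlgebra.ofCoeff Finsupp.mapDomain_single

theorem Phi_zero (ks : ℕ → ℕ) : Phi (K := K) (n := n) ks 0 = 0 :=
  congrArg MonoidAlgebra.ofCoeff Finsupp.mapDomain_zero

theorem Phi_add (ks : ℕ → ℕ) (f g : MonoidAlgebra K (FreeMonoid (X0 n))) :
    Phi ks (f + g) = Phi ks f + Phi ks g :=
  congrArg MonoidAlgebra.ofCoeff Finsupp.mapDomain_add

theorem Phi_sub (ks : ℕ → ℕ) (f g : MonoidAlgebra K (FreeMonoid (X0 n))) :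
    Phi ks (f - g) = Phi ks f - Phi ks g := by
  have : Phi ks (f - g) + Phi ks g = Phi ks f := by
    rw [← Phi_add, sub_add_cancel]
  exact eq_sub_of_add_eq this

theorem Phi_smul (ks : ℕ → ℕ) (c : K) (f : MonoidAlgebra K (FreeMonoid (X0 n))) :
    Phi ks (c • f) = c • Phi ks f :=
  congrArg MonoidAlgebra.ofCoeff (Finsupp.mapDomain_smul c f.coeff)

theorem phi_word (ks : ℕ → ℕ) (w₁ w₂ : FreeMonoid (X0 n)) (a b : X0 n) :
    Phi (K := K) ks (mOfW K (w₁ * (FreeMonoid.of a * FreeMonoid.of b) * w₂)) =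
      mOfW K (FreeMonoid.ofList (psiPre n ks 0
          (w₁.toList.map (fun x : X0 n => (x : Fin n))))) *
        mOfW K (FreeMonoid.of (a : Fin n) *
          (FreeMonoid.of (px n 1)) ^ ks w₁.toList.length * FreeMonoid.of (b : Fin n)) *
        mOfW K (FreeMonoid.ofList (tailF n ks w₁.toList.length
          (w₂.toList.map (fun x : X0 n => (x : Fin n))))) := by
  rw [mOfW, Phi_single, mOfW_mul, mOfW_mul]
  congr 1
  have harg : (FreeMonoid.map (fun x : X0 n => (x : Fin n))
      (w₁ * (FreeMonoid.of a * FreeMonoid.of b) * w₂)).toList =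
      (w₁.toList.map (fun x : X0 n => (x : Fin n))) ++
        (a : Fin n) :: (b : Fin n) ::
        (w₂.toList.map (fun x : X0 n => (x : Fin n))) := by
    simp [FreeMonoid.toList_map, FreeMonoid.toList_mul]
  rw [psiW, harg]
  have := psiF_decomp n ks (w₁.toList.map (fun x : X0 n => (x : Fin n)))
    (w₂.toList.map (fun x : X0 n => (x : Fin n))) (a : Fin n) (b : Fin n)
  rw [this, List.length_map]

theorem phi_gen_bin (ks : ℕ → ℕ) (M0 : Set (MonoidAlgebra K (FreeMonoid (X0 n))))
    (a b c d : X0 n)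
    (hemb : emb K n (m2 K a b - m2 K c d) ∈ Mext' K n M0)
    (w₁ w₂ : FreeMonoid (X0 n)) :
    Phi ks (mOfW K w₁ * (m2 K a b - m2 K c d) * mOfW K w₂) ∈
      idealSpan K (Mext' K n M0) := by
  have hx : mOfW K w₁ * (m2 K a b - m2 K c d) * mOfW K w₂ =
      mOfW K (w₁ * (FreeMonoid.of a * FreeMonoid.of b) * w₂) -
        mOfW K (w₁ * (FreeMonoid.of c * FreeMonoid.of d) * w₂) := by
    simp [m2_def, mul_sub, sub_mul, mOfW_mul]
  rw [hx, Phi_sub, phi_word, phi_word]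
  set P := mOfW K (FreeMonoid.ofList (psiPre n ks 0
      (w₁.toList.map (fun x : X0 n => (x : Fin n))))) with hP
  set T := mOfW K (FreeMonoid.ofList (tailF n ks w₁.toList.length
      (w₂.toList.map (fun x : X0 n => (x : Fin n))))) with hT
  set k := ks w₁.toList.length with hk
  set A := mOfW K (FreeMonoid.of (a : Fin n) *
      (FreeMonoid.of (px n 1)) ^ k * FreeMonoid.of (b : Fin n)) with hA
  set C := mOfW K (FreeMonoid.of (c : Fin n) *
      (FreeMonoid.of (px n 1)) ^ k * FreeMonoid.of (d : Fin n)) with hC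
  set Z := mOfW K ((FreeMonoid.of (px n n)) ^ k) with hZ
  have hsplit : P * A * T - P * C * T =
      P * (A - Z * m2 K (a : Fin n) (b : Fin n)) * T -
        P * (C - Z * m2 K (c : Fin n) (d : Fin n)) * T +
        (P * Z) * emb K n (m2 K a b - m2 K c d) * T := by
    rw [emb_sub, emb_m2, emb_m2]
    noncomm_ring
  rw [hsplit]
  refine Submodule.add_mem _ (Submodule.sub_mem _ ?_ ?_)
    (mem_idealSpan_of_mem _ _ hemb)
  · exact idealSpan_mul_mem P T (move2_mem M0 a.2.1 a.2.2 k)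
  · exact idealSpan_mul_mem P T (move2_mem M0 c.2.1 c.2.2 k)

theorem phi_gen_mono (ks : ℕ → ℕ) (M0 : Set (MonoidAlgebra K (FreeMonoid (X0 n))))
    (a b : X0 n)
    (hemb : emb K n (m2 K a b) ∈ Mext' K n M0)
    (w₁ w₂ : FreeMonoid (X0 n)) :
    Phi ks (mOfW K w₁ * m2 K a b * mOfW K w₂) ∈
      idealSpan K (Mext' K n M0) := by
  have hx : mOfW K w₁ * m2 K a b * mOfW K w₂ =
      mOfW K (w₁ * (FreeMonoid.of a * FreeMonoid.of b) * w₂) := by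
    simp [m2_def, mOfW_mul]
  rw [hx, phi_word]
  set P := mOfW K (FreeMonoid.ofList (psiPre n ks 0
      (w₁.toList.map (fun x : X0 n => (x : Fin n))))) with hP
  set T := mOfW K (FreeMonoid.ofList (tailF n ks w₁.toList.length
      (w₂.toList.map (fun x : X0 n => (x : Fin n))))) with hT
  set k := ks w₁.toList.length with hk
  set A := mOfW K (FreeMonoid.of (a : Fin n) *
      (FreeMonoid.of (px n 1)) ^ k * FreeMonoid.of (b : Fin n)) with hA
  set Z := mOfW K ((FreeMonoid.of (px n n)) ^ k) with hZ
  have hsplit : P * A * T =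
      P * (A - Z * m2 K (a : Fin n) (b : Fin n)) * T +
        (P * Z) * emb K n (m2 K a b) * T := by
    rw [emb_m2]
    noncomm_ring
  rw [hsplit]
  exact Submodule.add_mem _
    (idealSpan_mul_mem P T (move2_mem M0 a.2.1 a.2.2 k))
    (mem_idealSpan_of_mem _ _ hemb)

theorem phi_gen_mem (ks : ℕ → ℕ) (M0 : Set (MonoidAlgebra K (FreeMonoid (X0 n))))
    (hM0 : IsQHS K M0) {g : MonoidAlgebra K (FreeMonoid (X0 n))}
    (hg : g ∈ M0 \ {m2 K (topEl (X0 n)) (botEl (X0 n))})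
    (w₁ w₂ : FreeMonoid (X0 n)) :
    Phi ks (mOfW K w₁ * g * mOfW K w₂) ∈ idealSpan K (Mext' K n M0) := by
  have hemb : emb K n g ∈ Mext' K n M0 := Or.inl (Or.inl (Or.inl ⟨g, hg, rfl⟩))
  rcases hM0.2.2 g hg.1 with ⟨a, b, _, rfl⟩ | ⟨a, b, c, d, _, _, _, rfl⟩ |
    ⟨a, b, d, _, _, rfl⟩
  · exact phi_gen_mono ks M0 a b hemb w₁ w₂
  · exact phi_gen_bin ks M0 a b c d hemb w₁ w₂
  · exact phi_gen_bin ks M0 a b b d hemb w₁ w₂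

theorem monomial_span (p : MonoidAlgebra K (FreeMonoid (X0 n))) :
    p ∈ Submodule.span K (Set.range (fun w : FreeMonoid (X0 n) => mOfW K w)) := by
  induction p using MonoidAlgebra.induction_linear with
  | zero => exact Submodule.zero_mem _
  | add f h hf hh => exact Submodule.add_mem _ hf hh
  | single w c =>
    have h1 : (MonoidAlgebra.single w c : MonoidAlgebra K (FreeMonoid (X0 n))) =
        c • mOfW K w := by
      rw [mOfW, MonoidAlgebra.smul_single', mul_one]
    rw [h1]
    exact Submodule.smul_mem _ _ (Submodule.subset_span ⟨w, rfl⟩)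

theorem phi_ideal (ks : ℕ → ℕ) (M0 : Set (MonoidAlgebra K (FreeMonoid (X0 n))))
    (hM0 : IsQHS K M0) {x : MonoidAlgebra K (FreeMonoid (X0 n))}
    (hx : x ∈ idealSpan K (M0 \ {m2 K (topEl (X0 n)) (botEl (X0 n))})) :
    Phi ks x ∈ idealSpan K (Mext' K n M0) := by
  induction hx using Submodule.span_induction with
  | mem y hy =>
    obtain ⟨p, q, g, hg, rfl⟩ := hy
    have hp := monomial_span (K := K) (n := n) p
    induction hp using Submodule.span_induction with
    | mem y' hy' =>
      obtain ⟨w, rfl⟩ := hy'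
      have hq := monomial_span (K := K) (n := n) q
      induction hq using Submodule.span_induction with
      | mem y'' hy'' =>
        obtain ⟨w', rfl⟩ := hy''
        exact phi_gen_mem ks M0 hM0 hg w w'
      | zero =>
        rw [mul_zero, Phi_zero]; exact Submodule.zero_mem _
      | add y z _ _ hy hz =>
        rw [mul_add, Phi_add]; exact Submodule.add_mem _ hy hz
      | smul c y _ hy =>
        rw [mul_smul_comm, Phi_smul]; exact Submodule.smul_mem _ c hy
    | zero =>
      rw [zero_mul, zero_mul, Phi_zero]; exact Submodule.zero_mem _
    | add y z _ _ hy hz =>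
      rw [add_mul, add_mul, Phi_add]; exact Submodule.add_mem _ hy hz
    | smul c y _ hy =>
      rw [smul_mul_assoc, smul_mul_assoc, Phi_smul]
      exact Submodule.smul_mem _ c hy
  | zero => rw [Phi_zero]; exact Submodule.zero_mem _
  | add y z _ _ hy hz => rw [Phi_add]; exact Submodule.add_mem _ hy hz
  | smul c y _ hy => rw [Phi_smul]; exact Submodule.smul_mem _ c hy

theorem ileave_eq_psiF (ks : ℕ → ℕ) : ∀ (m : ℕ) (w : Fin m → Fin n) (k : ℕ),
    (List.ofFn fun i : Fin m => if i.val + 1 = m then FreeMonoid.of (w i)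
      else FreeMonoid.of (w i) * (FreeMonoid.of (px n 1)) ^ ks (k + i.val)).prod
      = FreeMonoid.ofList (psiF n ks k (List.ofFn w)) := by
  intro m
  induction m with
  | zero => intro w k; simp
  | succ m ih =>
    intro w k
    cases m with
    | zero =>
      simp [List.ofFn_succ]
    | succ m' =>
      rw [List.ofFn_succ, List.prod_cons]
      have hhead : (if ((0 : Fin (m' + 1 + 1)) : Fin (m' + 1 + 1)).val + 1 = m' + 1 + 1
            then FreeMonoid.of (w 0)
            else FreeMonoid.of (w 0) *
              (FreeMonoid.of (px n 1)) ^ ks (k + ((0 : Fin (m' + 1 + 1))).val))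
          = FreeMonoid.of (w 0) * (FreeMonoid.of (px n 1)) ^ ks k := by
        rw [if_neg (by simp)]
        simp
      rw [hhead]
      have htail : (List.ofFn fun i : Fin (m' + 1) =>
            if (i.succ).val + 1 = m' + 1 + 1 then FreeMonoid.of (w i.succ)
            else FreeMonoid.of (w i.succ) *
              (FreeMonoid.of (px n 1)) ^ ks (k + (i.succ).val))
          = (List.ofFn fun i : Fin (m' + 1) =>
            if i.val + 1 = m' + 1 then FreeMonoid.of ((fun j : Fin (m' + 1) => w j.succ) i)
            else FreeMonoid.of ((fun j : Fin (m' + 1) => w j.succ) i) *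
              (FreeMonoid.of (px n 1)) ^ ks ((k + 1) + i.val)) := by
        congr 1
        funext i
        have h1 : (i.succ).val = i.val + 1 := rfl
        rw [h1, show k + (i.val + 1) = (k + 1) + i.val from by omega]
        simp [Nat.add_right_cancel_iff]
      rw [htail, ih (fun j : Fin (m' + 1) => w j.succ) (k + 1)]
      rw [show (List.ofFn w : List (Fin n)) =
        w 0 :: List.ofFn (fun j : Fin (m' + 1) => w j.succ) from List.ofFn_succ (f := w)]
      rw [show (List.ofFn (fun j : Fin (m' + 1) => w j.succ) : List (Fin n)) =
        w (0 : Fin (m' + 1)).succ ::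
          List.ofFn (fun j : Fin m' => w j.succ.succ) from
          List.ofFn_succ (f := fun j : Fin (m' + 1) => w j.succ)]
      rw [psiF_cons_cons, of_pow_eq]
      rfl


theorem ileave_eq (ks : ℕ → ℕ) {m : ℕ} (w : Fin m → Fin n) :
    ileave n w ks = FreeMonoid.ofList (psiF n ks 0 (List.ofFn w)) := by
  have h := ileave_eq_psiF ks m w 0
  simp only [zero_add] at h
  rw [ileave, ← h]

theorem Phi_mOf (ks : ℕ → ℕ) {m : ℕ} (u : Fin m → X0 n) :
    Phi (K := K) ks (mOf K u) = mOfW K (ileave n (fun i => (u i : Fin n)) ks) := by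
  rw [mOf, mOfW, Phi_single, mOfW]
  congr 1
  rw [psiW, ileave_eq]
  congr 2
  show ((List.ofFn u).map (fun x : X0 n => (x : Fin n))) = _
  rw [List.map_ofFn]
  rfl

end AuxExt3

/-- **Corollary (m3).** In the extension construction, if `u = v (mod I₀)` for
degree-`m` monomials over `X₀`, then the interleaved monomials
`u_1 x_1^{k_1} ⋯ x_1^{k_{m-1}} u_m` and `v_1 x_1^{k_1} ⋯ x_1^{k_{m-1}} v_m`
are congruent modulo `I`. -/
theorem ext_interleaved_congruence
    (K : Type*) [Field K] (n : ℕ) [Fact (5 ≤ n)]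
    (M0 : Set (MonoidAlgebra K (FreeMonoid (X0 n)))) (hM0 : IsQHS K M0)
    (m : ℕ) (u v : Fin m → X0 n)
    (huv : mOf K u - mOf K v ∈
      idealSpan K (M0 \ {m2 K (topEl (X0 n)) (botEl (X0 n))}))
    (ks : ℕ → ℕ) :
    mOfW K (ileave n (fun i => (u i : Fin n)) ks) -
      mOfW K (ileave n (fun i => (v i : Fin n)) ks) ∈
      idealSpan K (Mext' K n M0) := by
  have h := phi_ideal ks M0 hM0 huv
  rw [Phi_sub, Phi_mOf, Phi_mOf] at h
  exact h
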